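/- Let (X, F) be a measurable space, μ : F → Y a monotone measure, and ∘ : Y × Y → Y a nondecreasing binary operation. Let s ≥ 1 and suppose that a^s ∘ b ≥ (a ∘ b)^s for all a, b ∈ Y. Then for every measurable function f : X → Y and every A ∈ F, the Jensen type inequality ∫_A f^s ∘ μ ≥ (∫_A f ∘ μ)^s holds. -/

import Mathlib

open scoped ENNReal

/-- The generalized Sugeno integral of `f` on `A` with respect to the monotone
measure `μ` and the binary operation `op`, where the value scale is the set
`Y ⊆ [0,∞]` (either `[0,1]` or `[0,∞]`):
`∫_A f ∘ μ = sup_{α ∈ Y} (α ∘ μ(A ∩ {f ≥ α}))`. -/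
noncomputable def sugenoGen {X : Type*} (Y : Set ℝ≥0∞) (op : ℝ≥0∞ → ℝ≥0∞ → ℝ≥0∞)
    (μ : Set X → ℝ≥0∞) (f : X → ℝ≥0∞) (A : Set X) : ℝ≥0∞ :=
  ⨆ α ∈ Y, op α (μ (A ∩ {x | α ≤ f x}))

/-- Jensen type inequality for the generalized Sugeno integral:
if `s ≥ 1` and `a^s ∘ b ≥ (a ∘ b)^s` for all `a, b ∈ Y`, then
`∫_A f^s ∘ μ ≥ (∫_A f ∘ μ)^s`. -/
theorem jensen_type_sugenoGen {X : Type*} [MeasurableSpace X]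
    -- the value scale Y is [0,1] or [0,∞]
    (Y : Set ℝ≥0∞) (hY : Y = Set.Icc 0 1 ∨ Y = Set.univ)
    -- μ : F → Y is a monotone measure
    (μ : Set X → ℝ≥0∞)
    (hμY : ∀ A : Set X, MeasurableSet A → μ A ∈ Y)
    (hμ0 : μ ∅ = 0) (hμX : 0 < μ Set.univ)
    (hμmono : ∀ A B : Set X, MeasurableSet A → MeasurableSet B → A ⊆ B → μ A ≤ μ B)
    -- ∘ : Y × Y → Y is a nondecreasing binary operation
    (op : ℝ≥0∞ → ℝ≥0∞ → ℝ≥0∞)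
    (hopY : ∀ a ∈ Y, ∀ b ∈ Y, op a b ∈ Y)
    (hopmono : ∀ a b c d : ℝ≥0∞, b ≤ a → d ≤ c → op b d ≤ op a c)
    -- s ≥ 1 and a^s ∘ b ≥ (a ∘ b)^s for all a, b ∈ Y
    (s : ℝ) (hs : 1 ≤ s)
    (hpow : ∀ a ∈ Y, ∀ b ∈ Y, (op a b) ^ s ≤ op (a ^ s) b)
    -- f : X → Y measurable, A ∈ F
    (f : X → ℝ≥0∞) (hf : Measurable f) (hfY : ∀ x, f x ∈ Y)
    (A : Set X) (hA : MeasurableSet A) :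
    (sugenoGen Y op μ f A) ^ s ≤ sugenoGen Y op μ (fun x => f x ^ s) A := by
  have hs0 : (0 : ℝ) < s := lt_of_lt_of_le one_pos hs
  rw [sugenoGen, ← ENNReal.le_rpow_inv_iff hs0]
  refine iSup₂_le fun α hα => ?_
  rw [ENNReal.le_rpow_inv_iff hs0]
  -- key step
  have hmeas : MeasurableSet (A ∩ {x | α ≤ f x}) :=
    hA.inter (measurableSet_le measurable_const hf)
  have hb : μ (A ∩ {x | α ≤ f x}) ∈ Y := hμY _ hmeas
  have hαs : α ^ s ∈ Y := by
    rcases hY with h | h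
    · subst h
      exact ⟨zero_le, ENNReal.rpow_le_one hα.2 hs0.le⟩
    · simp [h]
  calc (op α (μ (A ∩ {x | α ≤ f x}))) ^ s
      ≤ op (α ^ s) (μ (A ∩ {x | α ≤ f x})) := hpow α hα _ hb
    _ ≤ op (α ^ s) (μ (A ∩ {x | α ^ s ≤ f x ^ s})) := by
        refine hopmono _ _ _ _ le_rfl (hμmono _ _ hmeas ?_ ?_)
        · exact hA.inter (measurableSet_le measurable_const (hf.pow_const s))
        · rintro x ⟨hxA, hx⟩
          exact ⟨hxA, ENNReal.rpow_le_rpow hx hs0.le⟩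
    _ ≤ sugenoGen Y op μ (fun x => f x ^ s) A := by
        rw [sugenoGen]
        exact le_biSup (fun β => op β (μ (A ∩ {x | β ≤ f x ^ s}))) hαs
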